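/- Let γ ∈ GL_r(K) and z = (z_1,…,z_{r−1},1)^T. For 1 ≤ j,l ≤ r−1 define 𝔠^γ_{jl}(z) := c^γ_{jl} − c^γ_{jr} z_l, where c^γ_{jl} is the (j,l)-cofactor of γ, and let 𝔈^γ(z) = (𝔠^γ_{jl}(z)) be the resulting (r−1)×(r−1) matrix. Then det(𝔈^γ(z)) = det(γ)^{r−2} · j(γ,z), where j(γ,z) = a_{r1}z_1 + ⋯ + a_{r,r−1}z_{r−1} + a_{rr} for γ = (a_{νμ}). -/

import Mathlib

open Matrix


/-- Proposition 5.5(i): for `γ ∈ GL_r(K)` and `z = (z_1, …, z_{r-1}, 1)ᵀ`, letting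
`𝔠^γ_{jl}(z) = c^γ_{jl} - c^γ_{jr} z_l` (with `c^γ_{jl}` the `(j,l)`-cofactor of `γ`, i.e.
`adjugate γ l j`), the `(r-1)×(r-1)` matrix `𝔈^γ(z) = (𝔠^γ_{jl}(z))` satisfies
`det 𝔈^γ(z) = det(γ)^{r-2} ⬝ j(γ, z)` where `j(γ, z) = Σ_l γ_{r l} z_l`.
Here `r = n + 1`. -/
theorem stmt9 {K : Type*} [Field K] (n : ℕ) (hn : 1 ≤ n)
    (γ : Matrix (Fin (n + 1)) (Fin (n + 1)) K) (hγ : IsUnit γ.det)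
    (z : Fin (n + 1) → K) (hz : z (Fin.last n) = 1) :
    Matrix.det (Matrix.of fun j l : Fin n =>
        γ.adjugate l.castSucc j.castSucc
          - γ.adjugate (Fin.last n) j.castSucc * z l.castSucc)
      = γ.det ^ (n - 1) * ∑ l, γ (Fin.last n) l * z l := by
  set r := Fin.last n with hr
  set w : Fin (n + 1) → K := fun i => if i = r then 0 else z i with hw
  set e : Fin (n + 1) → K := fun k => if k = r then 1 else 0 with he
  set W : Matrix (Fin (n + 1)) (Fin (n + 1)) K := vecMulVec w e with hW
  -- W is square-zero
  have hWW : W * W = 0 := by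
    ext i k
    simp only [hW, Matrix.mul_apply, vecMulVec_apply, Matrix.zero_apply]
    rw [Fintype.sum_eq_single r]
    · simp [he, hw]
    · intro j hj
      simp [he, hj]
  set R : Matrix (Fin (n + 1)) (Fin (n + 1)) K := 1 - W with hRdef
  set S : Matrix (Fin (n + 1)) (Fin (n + 1)) K := 1 + W with hSdef
  have hRS : R * S = 1 := by
    rw [hRdef, hSdef]
    noncomm_ring
    rw [hWW]
    simp
  -- det R = 1 : R is upper triangular with unit diagonal
  have hRut : R.BlockTriangular id := by
    intro i k hik
    have hkr : k ≠ r := by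
      simp only [hr]
      intro h
      subst h
      exact absurd (Fin.le_last i) (not_le.mpr hik)
    have : i ≠ k := (ne_of_gt hik)
    simp [hRdef, hW, vecMulVec_apply, Matrix.one_apply, this, he, hkr]
  have hdetR : R.det = 1 := by
    rw [Matrix.det_of_upperTriangular hRut]
    have : ∀ i, R i i = 1 := by
      intro i
      by_cases hir : i = r <;> simp [hRdef, hW, vecMulVec_apply, he, hw, hir]
    simp [this]
  -- adjugate R = S
  have hadjR : R.adjugate = S := by
    have h1 : S * R = 1 := mul_eq_one_comm.mp hRS
    calc R.adjugate = (S * R) * R.adjugate := by rw [h1, one_mul]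
      _ = S * (R * R.adjugate) := by rw [Matrix.mul_assoc]
      _ = S := by rw [Matrix.mul_adjugate, hdetR, one_smul, mul_one]
  set A := γ.adjugate with hA
  set B : Matrix (Fin (n + 1)) (Fin (n + 1)) K := R * A with hB
  -- the matrix in question is the transpose of the top-left block of B
  have hE : (Matrix.of fun j l : Fin n =>
        γ.adjugate l.castSucc j.castSucc
          - γ.adjugate (Fin.last n) j.castSucc * z l.castSucc)
      = (B.submatrix Fin.castSucc Fin.castSucc)ᵀ := by
    ext j l
    have hlr : (Fin.castSucc l : Fin (n + 1)) ≠ r := (Fin.castSucc_lt_last l).ne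
    have hWA : (W * A) l.castSucc j.castSucc = z l.castSucc * A r j.castSucc := by
      simp only [hW, Matrix.mul_apply, vecMulVec_apply]
      rw [Fintype.sum_eq_single r]
      · simp [he, hw, hlr]
      · intro k hk
        simp [he, hk]
    simp only [Matrix.transpose_apply, Matrix.submatrix_apply, Matrix.of_apply, hB, hRdef,
      Matrix.sub_mul, Matrix.sub_apply, Matrix.one_mul, hWA, ← hA, ← hr]
    ring
  rw [hE, Matrix.det_transpose]
  -- relate to the (r, r) entry of adjugate B
  have hcof : B.adjugate r r = B.det ^ 0 * Matrix.det (B.submatrix Fin.castSucc Fin.castSucc) := by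
    rw [Matrix.adjugate_fin_succ_eq_det_submatrix B r r]
    have : ((r : ℕ) + (r : ℕ)) = n + n := by simp [hr]
    rw [this, hr, Fin.succAbove_last, Even.neg_one_pow ⟨n, rfl⟩, pow_zero]
  rw [pow_zero, one_mul] at hcof
  rw [← hcof, hB, Matrix.adjugate_mul_distrib, hadjR, hA,
    Matrix.adjugate_adjugate γ (by simp; omega)]
  have hcard : Fintype.card (Fin (n + 1)) - 2 = n - 1 := by simp
  rw [hcard, Matrix.smul_mul, Matrix.smul_apply, Matrix.mul_apply, smul_eq_mul,
    Finset.mul_sum]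
  have hSkr : ∀ k, S k r = z k := by
    intro k
    by_cases hkr : k = r <;> simp [hSdef, hW, vecMulVec_apply, Matrix.one_apply, hkr, he, hw, hz]
  simp only [hSkr, Finset.mul_sum, hr]
  simp only [← hr, hSkr]
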